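/- (M-step optimality, HMM case.) Let m ≥ 1, T ≥ 1, observations z_1,…,z_T ∈ ℝ, weights s(i,n) ≥ 0 for i ∈ {1,…,m}, n ∈ {1,…,T} with ∑_{i=1}^m s(i,n) = 1 for every n and S_i := ∑_{n=1}^T s(i,n) > 0 for every i, and counts c_{ij} ≥ 0 with c_i := ∑_{j=1}^m c_{ij} > 0 for every i. Define F(a, θ, σ²) := ∑_{i,j=1}^m c_{ij} log a_{ij} + ∑_{n=1}^T ∑_{i=1}^m s(i,n) · ( −(1/2) log(2πσ²) − (z_n − θ_i)²/(2σ²) ), and set â_{ij} := c_{ij}/c_i, θ̂_i := (∑_{n=1}^T s(i,n) z_n)/S_i, and σ̂² := (1/T) ∑_{n=1}^T ∑_{i=1}^m s(i,n)(z_n − θ̂_i)². If σ̂² > 0, then for every row-stochastic m×m matrix a with strictly positive entries, every θ ∈ ℝ^m and every σ² > 0, F(a, θ, σ²) ≤ F(â, θ̂, σ̂²). -/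

import Mathlib

open scoped BigOperators Real

/-- The M-step transition matrix update `â_{ij} = c_{ij} / c_i`. -/
noncomputable def aHat {m : ℕ} (c : Fin m → Fin m → ℝ) : Fin m → Fin m → ℝ :=
  fun i j => c i j / ∑ j', c i j'

/-- The M-step mean update `θ̂_i = (∑_n s(i,n) z_n) / ∑_n s(i,n)`. -/
noncomputable def thetaHat {m T : ℕ} (z : Fin T → ℝ) (s : Fin m → Fin T → ℝ) :
    Fin m → ℝ :=
  fun i => (∑ n, s i n * z n) / ∑ n, s i n

/-- The M-step variance update `σ̂² = (1/T) ∑_n ∑_i s(i,n) (z_n - θ̂_i)²`. -/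
noncomputable def sigmaHat2 {m T : ℕ} (z : Fin T → ℝ) (s : Fin m → Fin T → ℝ) : ℝ :=
  (1 / (T : ℝ)) * ∑ n, ∑ i, s i n * (z n - thetaHat z s i) ^ 2

/-- The EM/SAEM intermediate quantity for the hidden Markov model:
`F(a,θ,σ²) = ∑_{ij} c_{ij} log a_{ij} + ∑_n ∑_i s(i,n)(-(1/2) log(2πσ²) - (z_n - θ_i)²/(2σ²))`. -/
noncomputable def Fq {m T : ℕ} (z : Fin T → ℝ) (s : Fin m → Fin T → ℝ)
    (c : Fin m → Fin m → ℝ) (a : Fin m → Fin m → ℝ) (θ : Fin m → ℝ) (σ2 : ℝ) : ℝ :=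
  (∑ i, ∑ j, c i j * Real.log (a i j)) +
    ∑ n, ∑ i, s i n * (-(1 / 2) * Real.log (2 * π * σ2) - (z n - θ i) ^ 2 / (2 * σ2))

/-- Gibbs inequality for one row. -/
lemma gibbs_row {m : ℕ} (c a : Fin m → ℝ) (hc : ∀ j, 0 ≤ c j) (hC : 0 < ∑ j, c j)
    (ha : ∀ j, 0 < a j) (hrow : ∑ j, a j = 1) :
    ∑ j, c j * Real.log (a j) ≤ ∑ j, c j * Real.log (c j / ∑ j', c j') := by
  set C := ∑ j', c j' with hCdef
  have key : ∀ j ∈ Finset.univ, c j * Real.log (a j) - c j * Real.log (c j / C) ≤ a j * C - c j := by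
    intro j _
    rcases eq_or_lt_of_le (hc j) with h0 | h0
    · rw [← h0]
      simpa using mul_nonneg (ha j).le hC.le
    · have hlog := Real.log_le_sub_one_of_pos
        (show 0 < a j * C / c j from div_pos (mul_pos (ha j) hC) h0)
      rw [Real.log_div (mul_pos (ha j) hC).ne' h0.ne', Real.log_mul (ha j).ne' hC.ne'] at hlog
      rw [Real.log_div h0.ne' hC.ne']
      have h2 : c j * (Real.log (a j) + Real.log C - Real.log (c j)) ≤ c j * (a j * C / c j - 1) :=
        mul_le_mul_of_nonneg_left hlog (hc j)
      have h3 : c j * (a j * C / c j - 1) = a j * C - c j := by field_simp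
      nlinarith
  have hsum := Finset.sum_le_sum key
  rw [Finset.sum_sub_distrib, Finset.sum_sub_distrib, ← Finset.sum_mul, hrow, one_mul] at hsum
  linarith

/-- The weighted mean minimizes the weighted sum of squares. -/
lemma quad_min {T : ℕ} (z w : Fin T → ℝ) (hS : 0 < ∑ n, w n) (t : ℝ) :
    ∑ n, w n * (z n - (∑ n, w n * z n) / (∑ n, w n)) ^ 2 ≤ ∑ n, w n * (z n - t) ^ 2 := by
  set S := ∑ n, w n with hSdef
  set B := ∑ n, w n * z n with hBdef
  have expand : ∀ u : ℝ, ∑ n, w n * (z n - u) ^ 2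
      = (∑ n, w n * z n ^ 2) - 2 * u * B + u ^ 2 * S := by
    intro u
    rw [show (∑ n, w n * (z n - u) ^ 2)
        = ∑ n, (w n * z n ^ 2 - 2 * u * (w n * z n) + u ^ 2 * w n) from
        Finset.sum_congr rfl fun n _ => by ring,
      Finset.sum_add_distrib, Finset.sum_sub_distrib, ← Finset.mul_sum, ← Finset.mul_sum]
  have hB : B / S * S = B := div_mul_cancel₀ B hS.ne'
  have key : ∑ n, w n * (z n - t) ^ 2
      = (∑ n, w n * (z n - B / S) ^ 2) + S * (t - B / S) ^ 2 := by
    rw [expand, expand]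
    linear_combination (2 * t - 2 * (B / S)) * hB
  rw [key]
  nlinarith [sq_nonneg (t - B / S), hS]

/-- M-step optimality in the HMM case: the updates `â`, `θ̂`, `σ̂²` maximize the EM
intermediate quantity `F` over strictly positive row-stochastic matrices `a`, means `θ`
and variances `σ² > 0`. -/
theorem mstep_optimality_hmm (m T : ℕ) (hm : 1 ≤ m) (hT : 1 ≤ T)
    (z : Fin T → ℝ) (s : Fin m → Fin T → ℝ)
    (hs : ∀ i n, 0 ≤ s i n) (hsum : ∀ n, ∑ i, s i n = 1)
    (hSpos : ∀ i, 0 < ∑ n, s i n)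
    (c : Fin m → Fin m → ℝ) (hc : ∀ i j, 0 ≤ c i j) (hcpos : ∀ i, 0 < ∑ j, c i j)
    (hσ : 0 < sigmaHat2 z s) :
    ∀ (a : Fin m → Fin m → ℝ) (θ : Fin m → ℝ) (σ2 : ℝ),
      (∀ i j, 0 < a i j) → (∀ i, ∑ j, a i j = 1) → 0 < σ2 →
      Fq z s c a θ σ2 ≤ Fq z s c (aHat c) (thetaHat z s) (sigmaHat2 z s) := by
  intro a θ σ2 ha hrow hσ2
  have hTpos : (0 : ℝ) < T := by exact_mod_cast hT
  -- Part 1: transition part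
  have part1 : ∑ i, ∑ j, c i j * Real.log (a i j)
      ≤ ∑ i, ∑ j, c i j * Real.log (aHat c i j) :=
    Finset.sum_le_sum fun i _ =>
      gibbs_row (c i) (a i) (hc i) (hcpos i) (ha i) (hrow i)
  -- Gaussian part rewrite
  have gauss_eq : ∀ (θ' : Fin m → ℝ) (σ' : ℝ),
      (∑ n, ∑ i, s i n * (-(1 / 2) * Real.log (2 * π * σ') - (z n - θ' i) ^ 2 / (2 * σ')))
      = (T : ℝ) * (-(1 / 2) * Real.log (2 * π * σ'))
        - (∑ n, ∑ i, s i n * (z n - θ' i) ^ 2) / (2 * σ') := by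
    intro θ' σ'
    have inner : ∀ n, (∑ i, s i n * (-(1 / 2) * Real.log (2 * π * σ') - (z n - θ' i) ^ 2 / (2 * σ')))
        = -(1 / 2) * Real.log (2 * π * σ') - (∑ i, s i n * (z n - θ' i) ^ 2) / (2 * σ') := by
      intro n
      rw [show (∑ i, s i n * (-(1 / 2) * Real.log (2 * π * σ') - (z n - θ' i) ^ 2 / (2 * σ')))
          = ∑ i, (s i n * (-(1 / 2) * Real.log (2 * π * σ')) - s i n * (z n - θ' i) ^ 2 / (2 * σ'))
          from Finset.sum_congr rfl fun i _ => by ring,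
        Finset.sum_sub_distrib, ← Finset.sum_mul, hsum n, one_mul, ← Finset.sum_div]
    rw [Finset.sum_congr rfl fun n _ => inner n, Finset.sum_sub_distrib,
      Finset.sum_const, Finset.card_univ, Fintype.card_fin, nsmul_eq_mul, ← Finset.sum_div]
  -- Q(θ̂) = T * σ̂²
  have hQhat : (∑ n, ∑ i, s i n * (z n - thetaHat z s i) ^ 2) = (T : ℝ) * sigmaHat2 z s := by
    rw [sigmaHat2]
    field_simp
  -- Q(θ) ≥ Q(θ̂)
  have hQmin : (∑ n, ∑ i, s i n * (z n - thetaHat z s i) ^ 2)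
      ≤ ∑ n, ∑ i, s i n * (z n - θ i) ^ 2 := by
    have swap : ∀ g : Fin m → Fin T → ℝ, (∑ n, ∑ i, g i n) = ∑ i, ∑ n, g i n :=
      fun g => Finset.sum_comm
    rw [swap fun i n => s i n * (z n - thetaHat z s i) ^ 2, swap fun i n => s i n * (z n - θ i) ^ 2]
    exact Finset.sum_le_sum fun i _ => quad_min z (s i) (hSpos i) (θ i)
  have hQhat_nonneg : (0 : ℝ) ≤ (T : ℝ) * sigmaHat2 z s := by positivity
  -- log inequality
  have hlog : Real.log (sigmaHat2 z s) + 1 ≤ Real.log σ2 + sigmaHat2 z s / σ2 := by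
    have h := Real.log_le_sub_one_of_pos (show 0 < sigmaHat2 z s / σ2 from div_pos hσ hσ2)
    rw [Real.log_div hσ.ne' hσ2.ne'] at h
    linarith
  -- Part 2: Gaussian part
  have e1 : (T : ℝ) * sigmaHat2 z s / (2 * sigmaHat2 z s) = (T : ℝ) / 2 := by
    field_simp
  have e2 : (T : ℝ) * sigmaHat2 z s / (2 * σ2) = ((T : ℝ) / 2) * (sigmaHat2 z s / σ2) := by
    ring
  have twopi : (0 : ℝ) < 2 * π := by positivity
  have main : (T : ℝ) * (-(1 / 2) * Real.log (2 * π * σ2)) - (T : ℝ) * sigmaHat2 z s / (2 * σ2)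
      ≤ (T : ℝ) * (-(1 / 2) * Real.log (2 * π * sigmaHat2 z s))
        - (T : ℝ) * sigmaHat2 z s / (2 * sigmaHat2 z s) := by
    rw [Real.log_mul twopi.ne' hσ2.ne', Real.log_mul twopi.ne' hσ.ne', e1, e2]
    have hl2 := mul_le_mul_of_nonneg_left hlog (by positivity : (0 : ℝ) ≤ (T : ℝ) / 2)
    nlinarith [hl2]
  have hmono : (T : ℝ) * sigmaHat2 z s / (2 * σ2)
      ≤ (∑ n, ∑ i, s i n * (z n - θ i) ^ 2) / (2 * σ2) := by
    have h := hQmin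
    rw [hQhat] at h
    gcongr
  have part2 : (∑ n, ∑ i, s i n * (-(1 / 2) * Real.log (2 * π * σ2) - (z n - θ i) ^ 2 / (2 * σ2)))
      ≤ ∑ n, ∑ i, s i n *
        (-(1 / 2) * Real.log (2 * π * sigmaHat2 z s)
          - (z n - thetaHat z s i) ^ 2 / (2 * sigmaHat2 z s)) := by
    rw [gauss_eq, gauss_eq, hQhat]
    linarith [hmono, main]
  exact add_le_add part1 part2
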